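/- For every m ∈ ℕ and reals 0 < δ < ε < 1 there exists n ∈ ℕ such that for every finite set I with |I| > n there exists C ⊆ 2^I with 1 − ε − δ ≤ |C|·2^{−|I|} ≤ 1 − ε + δ, and such that for every X ⊆ 2^I with |X| ≤ m, | |⋂_{s ∈ X} (C + s)|·2^{−|I|} − (1 − ε)^{|X|} | < δ. -/

import Mathlib

open Finset

namespace ExistIndepAux

variable {V : Type} [Fintype V] [DecidableEq V]

noncomputable def Exv (R : ℕ) (V : Type) [Fintype V] [DecidableEq V]
    (f : (V → Fin R) → ℝ) : ℝ :=
  (∑ u : V → Fin R, f u) / (R : ℝ) ^ (Fintype.card V)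

variable {R : ℕ}

lemma card_Omega (R : ℕ) (V : Type) [Fintype V] [DecidableEq V] :
    Fintype.card (V → Fin R) = R ^ Fintype.card V := by
  simp [Fintype.card_fun]

lemma Exv_const (hR : 0 < R) (c : ℝ) : Exv R V (fun _ => c) = c := by
  have h : ((R : ℝ) ^ Fintype.card V) ≠ 0 := by positivity
  rw [Exv, Finset.sum_const, card_univ, card_Omega, nsmul_eq_mul]
  push_cast
  rw [mul_comm, mul_div_assoc, div_self h, mul_one]

lemma Exv_sub_const (hR : 0 < R) (f : (V → Fin R) → ℝ) (c : ℝ) :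
    Exv R V (fun u => f u - c) = Exv R V f - c := by
  have h : ((R : ℝ) ^ Fintype.card V) ≠ 0 := by positivity
  simp only [Exv, Finset.sum_sub_distrib] at *
  rw [sub_div, ← Exv, ← Exv, Exv_const hR]

lemma Exv_abs_le (hR : 0 < R) (f : (V → Fin R) → ℝ) (c : ℝ)
    (hf : ∀ u, |f u| ≤ c) : |Exv R V f| ≤ c := by
  have h : (0:ℝ) < (R : ℝ) ^ Fintype.card V := by positivity
  have hc : 0 ≤ c := le_trans (abs_nonneg _) (hf (fun _ => ⟨0, hR⟩))
  rw [Exv, abs_div, abs_of_pos h, div_le_iff₀ h]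
  calc |∑ u : V → Fin R, f u| ≤ ∑ u : V → Fin R, |f u| := Finset.abs_sum_le_sum_abs _ _
    _ ≤ ∑ _u : V → Fin R, c := Finset.sum_le_sum (fun u _ => hf u)
    _ = c * (R:ℝ) ^ Fintype.card V := by
        rw [Finset.sum_const, card_univ, card_Omega]
        ring

lemma sum_eq_Exv (hR : 0 < R) (f : (V → Fin R) → ℝ) :
    ∑ u : V → Fin R, f u = Exv R V f * (R : ℝ) ^ Fintype.card V := by
  have hh : ((R : ℝ) ^ Fintype.card V) ≠ 0 := by positivity
  rw [Exv, div_mul_cancel₀ _ hh]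

lemma Exv_mul_indep (hR : 0 < R) (A : Finset V) (f g : (V → Fin R) → ℝ)
    (hf : ∀ u v, (∀ x ∈ A, u x = v x) → f u = f v)
    (hg : ∀ u v, (∀ x ∉ A, u x = v x) → g u = g v) :
    Exv R V (fun u => f u * g u) = Exv R V f * Exv R V g := by
  classical
  set e := (Equiv.piEquivPiSubtypeProd (fun x => x ∈ A) (fun _ => Fin R)).symm with he
  set v₀ : Fin R := ⟨0, hR⟩
  set F : ({ x // x ∈ A } → Fin R) → ℝ := fun a => f (e (a, fun _ => v₀)) with hF
  set G : ({ x // ¬ x ∈ A } → Fin R) → ℝ := fun b => g (e (fun _ => v₀, b)) with hG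
  have hfe : ∀ a b, f (e (a, b)) = F a := by
    intro a b
    apply hf
    intro x hx
    simp [he, Equiv.piEquivPiSubtypeProd_symm_apply, dif_pos hx]
  have hge : ∀ a b, g (e (a, b)) = G b := by
    intro a b
    apply hg
    intro x hx
    simp [he, Equiv.piEquivPiSubtypeProd_symm_apply, dif_neg hx]
  have key : ∀ h : (V → Fin R) → ℝ, ∑ u : V → Fin R, h u
      = ∑ p : ({ x // x ∈ A } → Fin R) × ({ x // ¬ x ∈ A } → Fin R), h (e p) :=
    fun h => (Equiv.sum_comp e h).symm
  have h1 : ∑ u : V → Fin R, f u * g u = (∑ a, F a) * (∑ b, G b) := by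
    rw [key, Fintype.sum_prod_type]
    simp only [hfe, hge]
    rw [← Finset.sum_mul_sum]
  have h2 : ∑ u : V → Fin R, f u
      = (R : ℝ) ^ (Fintype.card { x // ¬ x ∈ A }) * ∑ a, F a := by
    rw [key, Fintype.sum_prod_type]
    simp only [hfe]
    rw [Finset.sum_comm]
    simp [Finset.sum_const, card_univ, Fintype.card_fun, mul_comm]
  have h3 : ∑ u : V → Fin R, g u
      = (R : ℝ) ^ (Fintype.card { x // x ∈ A }) * ∑ b, G b := by
    rw [key, Fintype.sum_prod_type]
    simp only [hge]
    simp [Finset.sum_const, card_univ, Fintype.card_fun, mul_comm]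
  have hcard : Fintype.card { x // x ∈ A } + Fintype.card { x // ¬ x ∈ A }
      = Fintype.card V := by
    rw [Fintype.card_subtype_compl]
    have : Fintype.card { x // x ∈ A } ≤ Fintype.card V := by
      convert Fintype.card_subtype_le (fun x => x ∈ A) using 2
    omega
  have hRV : ((R : ℝ) ^ Fintype.card V) ≠ 0 := by positivity
  rw [Exv, Exv, Exv, h1, h2, h3]
  rw [← hcard, pow_add]
  field_simp

lemma Exv_eval (hR : 0 < R) (y : V) (f : Fin R → ℝ) :
    Exv R V (fun u => f (u y)) = (∑ v, f v) / R := by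
  classical
  set e := (Equiv.piSplitAt y (fun _ : V => Fin R)).symm with he
  have key : ∑ u : V → Fin R, f (u y)
      = ∑ p : (Fin R) × ({ x // x ≠ y } → Fin R), f ((e p) y) :=
    (Equiv.sum_comp e _).symm
  have hev : ∀ p : (Fin R) × ({ x // x ≠ y } → Fin R), (e p) y = p.1 := by
    intro p
    simp [he, Equiv.piSplitAt_symm_apply]
  have hcV : Fintype.card (V → Fin R) = R * R ^ (Fintype.card { x // x ≠ y }) := by
    have := Fintype.card_congr e.symm
    rw [this, Fintype.card_prod, Fintype.card_fun, Fintype.card_fin]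
  rw [Exv, key]
  rw [Fintype.sum_prod_type]
  simp only [hev]
  rw [Fintype.card_fun] at hcV
  simp only [Finset.sum_const, card_univ, Fintype.card_fun, nsmul_eq_mul]
  have h2 : ((R:ℝ)) ^ Fintype.card V = (R:ℝ) * (R:ℝ) ^ (Fintype.card { x // x ≠ y }) := by
    have := hcV
    rw [Fintype.card_fin] at this
    calc ((R:ℝ)) ^ Fintype.card V = ((R ^ Fintype.card V : ℕ) : ℝ) := by push_cast; ring
      _ = ((R * R ^ (Fintype.card { x // x ≠ y }) : ℕ) : ℝ) := by rw [this]
      _ = (R:ℝ) * (R:ℝ) ^ (Fintype.card { x // x ≠ y }) := by push_cast; ring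
  rw [h2]
  rw [← Finset.mul_sum]
  have hRne : (R:ℝ) ≠ 0 := by positivity
  have hRp : ((R:ℝ) ^ (Fintype.card { x // x ≠ y })) ≠ 0 := by positivity
  push_cast
  field_simp
  simp only [Fintype.card_fin]
  ring

lemma Exv_prod_blocks (hR : 0 < R) {α : Type} [DecidableEq α] (F : Finset α)
    (B : α → Finset V) (G : α → (V → Fin R) → ℝ)
    (hdisj : ∀ x ∈ F, ∀ y ∈ F, x ≠ y → Disjoint (B x) (B y))
    (hG : ∀ x ∈ F, ∀ u v, (∀ z ∈ B x, u z = v z) → G x u = G x v) :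
    Exv R V (fun u => ∏ x ∈ F, G x u) = ∏ x ∈ F, Exv R V (G x) := by
  classical
  induction F using Finset.induction_on with
  | empty => simp [Exv_const hR (1:ℝ)]
  | @insert a s ha ih =>
    have hstep : Exv R V (fun u => G a u * ∏ x ∈ s, G x u)
        = Exv R V (G a) * Exv R V (fun u => ∏ x ∈ s, G x u) := by
      refine Exv_mul_indep (V := V) (R := R) hR (B a) (G a)
        (fun u => ∏ x ∈ s, G x u) ?_ ?_
      · exact hG a (mem_insert_self a s)
      · intro u v huv
        apply Finset.prod_congr rfl
        intro x hx
        apply hG x (mem_insert_of_mem hx)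
        intro z hz
        apply huv
        intro hzA
        have hd := hdisj a (mem_insert_self a s) x (mem_insert_of_mem hx)
          (by rintro rfl; exact ha hx)
        exact (Finset.disjoint_left.mp hd) hzA hz
    have ih' := ih (fun x hx y hy => hdisj x (mem_insert_of_mem hx) y (mem_insert_of_mem hy))
      (fun x hx => hG x (mem_insert_of_mem hx))
    rw [Finset.prod_insert ha]
    calc Exv R V (fun u => ∏ x ∈ insert a s, G x u)
        = Exv R V (fun u => G a u * ∏ x ∈ s, G x u) := by
          congr 1
          funext u
          rw [Finset.prod_insert ha]
      _ = _ := by rw [hstep, ih']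


noncomputable def ind (R thr : ℕ) : Fin R → ℝ := fun v => if (v : ℕ) < thr then 1 else 0

lemma sum_ind {R thr : ℕ} (hthr : thr ≤ R) : ∑ v : Fin R, ind R thr v = thr := by
  rw [show (∑ v : Fin R, ind R thr v) = ∑ v : Fin R, if (v:ℕ) < thr then (1:ℝ) else 0 from rfl]
  rw [Finset.sum_boole]
  congr 1
  rw [← Fintype.card_subtype]
  have e : { v : Fin R // (v:ℕ) < thr } ≃ Fin thr :=
    { toFun := fun v => ⟨v.1.1, v.2⟩
      invFun := fun w => ⟨⟨w.1, lt_of_lt_of_le w.2 hthr⟩, w.2⟩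
      left_inv := fun v => by ext; rfl
      right_inv := fun w => by ext; rfl }
  rw [Fintype.card_congr e, Fintype.card_fin]

lemma prod_boole' {α : Type} (s : Finset α) (p : α → Prop) [DecidablePred p] :
    (∏ a ∈ s, if p a then (1:ℝ) else 0) = if (∀ a ∈ s, p a) then (1:ℝ) else 0 := by
  by_cases h : ∀ a ∈ s, p a
  · rw [if_pos h]
    apply Finset.prod_eq_one
    intro a ha
    rw [if_pos (h a ha)]
  · rw [if_neg h]
    push_neg at h
    obtain ⟨a, ha, hpa⟩ := h
    exact Finset.prod_eq_zero ha (by rw [if_neg hpa])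

variable {V : Type} [Fintype V] [DecidableEq V] [AddCommGroup V] {R thr : ℕ}

noncomputable def Yx (R thr : ℕ) (X : Finset V) (x : V) (u : V → Fin R) : ℝ :=
  ∏ s ∈ X, ind R thr (u (x + s))

lemma Yx_eq_boole (X : Finset V) (x : V) (u : V → Fin R) :
    Yx R thr X x u = if (∀ s ∈ X, ((u (x + s)):ℕ) < thr) then (1:ℝ) else 0 := by
  rw [Yx]
  simp only [ind]
  rw [prod_boole' X (fun s => ((u (x + s)):ℕ) < thr)]
  congr 1

lemma Yx_mem_Icc (X : Finset V) (x : V) (u : V → Fin R) :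
    Yx R thr X x u = 0 ∨ Yx R thr X x u = 1 := by
  rw [Yx_eq_boole]
  by_cases h : ∀ s ∈ X, ((u (x + s)):ℕ) < thr
  · right; rw [if_pos h]
  · left; rw [if_neg h]


lemma Exv_Yx (hR : 0 < R) (hthr : thr ≤ R) (X : Finset V) (x : V) :
    Exv R V (Yx R thr X x) = ((thr : ℝ) / R) ^ X.card := by
  have h := Exv_prod_blocks (V := V) (R := R) hR X (fun s => {x + s})
    (fun s u => ind R thr (u (x + s)))
    (by
      intro s hs t ht hst
      rw [Finset.disjoint_singleton]
      intro h
      exact hst (add_left_cancel h))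
    (by
      intro s hs u v huv
      rw [huv (x + s) (Finset.mem_singleton_self _)])
  calc Exv R V (Yx R thr X x)
      = ∏ s ∈ X, Exv R V (fun u => ind R thr (u (x + s))) := h
    _ = ∏ _s ∈ X, ((thr : ℝ) / R) := by
        apply Finset.prod_congr rfl
        intro s _
        rw [Exv_eval hR (x + s) (ind R thr), sum_ind hthr]
    _ = ((thr : ℝ) / R) ^ X.card := Finset.prod_const _

noncomputable def Ybar (R thr : ℕ) (X : Finset V) (x : V) (u : V → Fin R) : ℝ :=
  Yx R thr X x u - ((thr : ℝ) / R) ^ X.card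

lemma Exv_Ybar (hR : 0 < R) (hthr : thr ≤ R) (X : Finset V) (x : V) :
    Exv R V (Ybar R thr X x) = 0 := by
  have : Ybar R thr X x = fun u => (Yx R thr X x) u - ((thr : ℝ) / R) ^ X.card := rfl
  rw [this, Exv_sub_const hR, Exv_Yx hR hthr, sub_self]

lemma q_mem {R thr : ℕ} (hR : 0 < R) (hthr : thr ≤ R) :
    0 ≤ (thr : ℝ) / R ∧ (thr : ℝ) / R ≤ 1 := by
  constructor
  · positivity
  · rw [div_le_one (by positivity)]
    exact_mod_cast hthr

lemma Ybar_abs_le (hR : 0 < R) (hthr : thr ≤ R) (X : Finset V) (x : V) (u : V → Fin R) :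
    |Ybar R thr X x u| ≤ 1 := by
  obtain ⟨hq0, hq1⟩ := q_mem hR hthr
  have hqk0 : (0:ℝ) ≤ ((thr : ℝ) / R) ^ X.card := by positivity
  have hqk1 : ((thr : ℝ) / R) ^ X.card ≤ 1 := pow_le_one₀ hq0 hq1
  rcases Yx_mem_Icc (R := R) (thr := thr) X x u with h | h <;>
    · rw [Ybar, h, abs_le]
      constructor <;> linarith

lemma Exv_Ybar_pow_abs_le (hR : 0 < R) (hthr : thr ≤ R) (X : Finset V) (x : V) (k : ℕ) :
    |Exv R V (fun u => (Ybar R thr X x u) ^ k)| ≤ 1 := by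
  apply Exv_abs_le hR
  intro u
  rw [abs_pow]
  exact pow_le_one₀ (abs_nonneg _) (Ybar_abs_le hR hthr X x u)


lemma count_lowimage (τ : ℕ) :
    ((univ : Finset (Fin (2*τ) → V)).filter
        (fun φ => ((univ : Finset (Fin (2*τ))).image φ).card ≤ τ)).card
      ≤ τ ^ (2*τ) * (Fintype.card V) ^ τ := by
  classical
  set Ψ : ((Fin (2*τ) → Fin τ) × (Fin τ → V)) → (Fin (2*τ) → V) :=
    fun p => p.2 ∘ p.1 with hΨ
  have hsub : (univ : Finset (Fin (2*τ) → V)).filter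
        (fun φ => ((univ : Finset (Fin (2*τ))).image φ).card ≤ τ)
      ⊆ (univ : Finset ((Fin (2*τ) → Fin τ) × (Fin τ → V))).image Ψ := by
    intro φ hφ
    rw [Finset.mem_filter] at hφ
    obtain ⟨-, hcard⟩ := hφ
    set l := ((univ : Finset (Fin (2*τ))).image φ).toList with hl
    have hlen : l.length ≤ τ := by
      rw [hl, Finset.length_toList]
      exact hcard
    have hmem : ∀ j : Fin (2*τ), φ j ∈ l := by
      intro j
      rw [hl, Finset.mem_toList]
      exact Finset.mem_image_of_mem φ (Finset.mem_univ j)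
    have hidx : ∀ j : Fin (2*τ), List.idxOf (φ j) l < τ :=
      fun j => lt_of_lt_of_le (List.idxOf_lt_length_iff.mpr (hmem j)) hlen
    refine Finset.mem_image.mpr ⟨⟨fun j => ⟨List.idxOf (φ j) l, hidx j⟩,
      fun i => l.getD i 0⟩, Finset.mem_univ _, ?_⟩
    funext j
    have hlt : List.idxOf (φ j) l < l.length := List.idxOf_lt_length_iff.mpr (hmem j)
    simp only [hΨ, Function.comp_apply]
    rw [List.getD_eq_getElem l 0 hlt]
    exact List.getElem_idxOf hlt
  calc _ ≤ ((univ : Finset ((Fin (2*τ) → Fin τ) × (Fin τ → V))).image Ψ).card :=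
        Finset.card_le_card hsub
    _ ≤ (univ : Finset ((Fin (2*τ) → Fin τ) × (Fin τ → V))).card :=
        Finset.card_image_le
    _ = τ ^ (2*τ) * (Fintype.card V) ^ τ := by
        rw [Finset.card_univ, Fintype.card_prod, Fintype.card_fun, Fintype.card_fun]
        simp [Fintype.card_fin]

noncomputable def multC {τ : ℕ} (φ : Fin (2*τ) → V) (x : V) : ℕ :=
  ((univ : Finset (Fin (2*τ))).filter (fun j => φ j = x)).card

lemma prod_Ybar_fiberwise {τ : ℕ} (X : Finset V) (φ : Fin (2*τ) → V) (u : V → Fin R) :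
    ∏ j : Fin (2*τ), Ybar R thr X (φ j) u
      = ∏ x ∈ (univ : Finset (Fin (2*τ))).image φ, (Ybar R thr X x u) ^ (multC φ x) := by
  classical
  rw [← Finset.prod_fiberwise_of_maps_to (fun j _ => Finset.mem_image_of_mem φ (Finset.mem_univ j))
    (fun j => Ybar R thr X (φ j) u)]
  apply Finset.prod_congr rfl
  intro x hx
  rw [multC, ← Finset.prod_const]
  apply Finset.prod_congr rfl
  intro j hj
  rw [Finset.mem_filter] at hj
  rw [hj.2]

lemma sum_multC {τ : ℕ} (φ : Fin (2*τ) → V) :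
    ∑ x ∈ (univ : Finset (Fin (2*τ))).image φ, multC φ x = 2*τ := by
  classical
  have h := Finset.card_eq_sum_card_fiberwise
    (fun j (_ : j ∈ (univ : Finset (Fin (2*τ)))) => Finset.mem_image_of_mem φ (Finset.mem_univ j))
  rw [Finset.card_univ, Fintype.card_fin] at h
  simpa [multC] using h.symm

lemma moment_bound (hR : 0 < R) (hthr : thr ≤ R) (X : Finset V) (fib : Finset V)
    (τ : ℕ)
    (hsep : ∀ x ∈ fib, ∀ y ∈ fib, ∀ s ∈ X, ∀ t ∈ X, x + s = y + t → x = y) :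
    ∑ u : V → Fin R, (∑ x ∈ fib, Ybar R thr X x u) ^ (2*τ)
      ≤ ((τ ^ (2*τ) * (Fintype.card V) ^ τ : ℕ) : ℝ) * (R:ℝ) ^ (Fintype.card V) := by
  classical
  have hpow : ∀ u : V → Fin R, (∑ x ∈ fib, Ybar R thr X x u) ^ (2*τ)
      = ∑ φ ∈ Fintype.piFinset (fun _ : Fin (2*τ) => fib),
          ∏ j : Fin (2*τ), Ybar R thr X (φ j) u := by
    intro u
    rw [← Finset.prod_univ_sum (fun _ : Fin (2*τ) => fib) (fun _ x => Ybar R thr X x u)]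
    rw [Finset.prod_const, Finset.card_univ, Fintype.card_fin]
  have hswap : ∑ u : V → Fin R, (∑ x ∈ fib, Ybar R thr X x u) ^ (2*τ)
      = ∑ φ ∈ Fintype.piFinset (fun _ : Fin (2*τ) => fib),
          ∑ u : V → Fin R, ∏ j : Fin (2*τ), Ybar R thr X (φ j) u := by
    simp_rw [hpow]
    exact Finset.sum_comm
  -- evaluate each φ-term
  have hblocks : ∀ φ ∈ Fintype.piFinset (fun _ : Fin (2*τ) => fib),
      ∑ u : V → Fin R, ∏ j : Fin (2*τ), Ybar R thr X (φ j) u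
        = (∏ x ∈ (univ : Finset (Fin (2*τ))).image φ,
            Exv R V (fun u => (Ybar R thr X x u) ^ (multC φ x))) * (R:ℝ) ^ (Fintype.card V) := by
    intro φ hφ
    have hmemfib : ∀ j, φ j ∈ fib := by
      intro j
      exact (Fintype.mem_piFinset.mp hφ) j
    have h1 : (fun u : V → Fin R => ∏ j : Fin (2*τ), Ybar R thr X (φ j) u)
        = fun u => ∏ x ∈ (univ : Finset (Fin (2*τ))).image φ,
            (Ybar R thr X x u) ^ (multC φ x) := by
      funext u
      exact prod_Ybar_fiberwise X φ u
    rw [show (∑ u : V → Fin R, ∏ j : Fin (2*τ), Ybar R thr X (φ j) u)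
        = ∑ u : V → Fin R, (fun u : V → Fin R => ∏ j : Fin (2*τ), Ybar R thr X (φ j) u) u
        from rfl, sum_eq_Exv hR, h1]
    congr 1
    apply Exv_prod_blocks hR ((univ : Finset (Fin (2*τ))).image φ)
      (fun x => X.image (fun s => x + s))
    · intro x hx y hy hxy
      rw [Finset.disjoint_left]
      intro z hzx hzy
      rw [Finset.mem_image] at hzx hzy
      obtain ⟨s, hs, hzs⟩ := hzx
      obtain ⟨t, ht, hzt⟩ := hzy
      have hxfib : x ∈ fib := by
        rw [Finset.mem_image] at hx
        obtain ⟨j, -, hj⟩ := hx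
        rw [← hj]; exact hmemfib j
      have hyfib : y ∈ fib := by
        rw [Finset.mem_image] at hy
        obtain ⟨j, -, hj⟩ := hy
        rw [← hj]; exact hmemfib j
      exact hxy (hsep x hxfib y hyfib s hs t ht (hzs.trans hzt.symm))
    · intro x hx u v huv
      have : Ybar R thr X x u = Ybar R thr X x v := by
        rw [Ybar, Ybar, Yx, Yx]
        congr 1
        apply Finset.prod_congr rfl
        intro s hs
        rw [huv (x + s) (Finset.mem_image_of_mem _ hs)]
      rw [this]
  -- terms with a multiplicity-one point vanish
  have hvanish : ∀ φ ∈ Fintype.piFinset (fun _ : Fin (2*τ) => fib),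
      ¬ (((univ : Finset (Fin (2*τ))).image φ).card ≤ τ) →
      (∏ x ∈ (univ : Finset (Fin (2*τ))).image φ,
          Exv R V (fun u => (Ybar R thr X x u) ^ (multC φ x))) = 0 := by
    intro φ hφ hbig
    have hex : ∃ x ∈ (univ : Finset (Fin (2*τ))).image φ, multC φ x = 1 := by
      by_contra hno
      push_neg at hno
      have hge : ∀ x ∈ (univ : Finset (Fin (2*τ))).image φ, 2 ≤ multC φ x := by
        intro x hx
        have h1 : 1 ≤ multC φ x := by
          rw [Finset.mem_image] at hx
          obtain ⟨j, -, hj⟩ := hx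
          apply Finset.card_pos.mpr
          exact ⟨j, Finset.mem_filter.mpr ⟨Finset.mem_univ _, hj⟩⟩
        have h2 := hno x hx
        omega
      have := Finset.sum_le_sum hge
      rw [sum_multC φ] at this
      rw [Finset.sum_const, smul_eq_mul] at this
      omega
    obtain ⟨x, hx, hmx⟩ := hex
    apply Finset.prod_eq_zero hx
    rw [hmx]
    simp only [pow_one]
    exact Exv_Ybar hR hthr X x
  -- bound
  rw [hswap]
  set P := Fintype.piFinset (fun _ : Fin (2*τ) => fib) with hP
  set f : (Fin (2*τ) → V) → ℝ := fun φ =>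
    ∑ u : V → Fin R, ∏ j : Fin (2*τ), Ybar R thr X (φ j) u with hf
  have hRVpos : (0:ℝ) < (R:ℝ) ^ (Fintype.card V) := by positivity
  have hterm_le : ∀ φ ∈ P, f φ ≤ (R:ℝ) ^ (Fintype.card V) := by
    intro φ hφ
    rw [hf]
    simp only []
    rw [hblocks φ hφ]
    have habs : |∏ x ∈ (univ : Finset (Fin (2*τ))).image φ,
        Exv R V (fun u => (Ybar R thr X x u) ^ (multC φ x))| ≤ 1 := by
      rw [Finset.abs_prod]
      apply Finset.prod_le_one
      · intro x hx; exact abs_nonneg _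
      · intro x hx; exact Exv_Ybar_pow_abs_le hR hthr X x _
    nlinarith [abs_le.mp habs]
  have hterm_zero : ∀ φ ∈ P, ¬ (((univ : Finset (Fin (2*τ))).image φ).card ≤ τ) → f φ = 0 := by
    intro φ hφ hbig
    rw [hf]
    simp only []
    rw [hblocks φ hφ, hvanish φ hφ hbig, zero_mul]
  calc ∑ φ ∈ P, f φ
      = ∑ φ ∈ P.filter (fun φ => ((univ : Finset (Fin (2*τ))).image φ).card ≤ τ), f φ := by
        rw [Finset.sum_filter_of_ne]
        intro φ hφ hne
        by_contra hbig
        exact hne (hterm_zero φ hφ hbig)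
    _ ≤ ∑ _φ ∈ P.filter (fun φ => ((univ : Finset (Fin (2*τ))).image φ).card ≤ τ),
          (R:ℝ) ^ (Fintype.card V) := by
        apply Finset.sum_le_sum
        intro φ hφ
        exact hterm_le φ (Finset.mem_filter.mp hφ).1
    _ = ((P.filter (fun φ => ((univ : Finset (Fin (2*τ))).image φ).card ≤ τ)).card : ℝ)
          * (R:ℝ) ^ (Fintype.card V) := by
        rw [Finset.sum_const, nsmul_eq_mul]
    _ ≤ ((τ ^ (2*τ) * (Fintype.card V) ^ τ : ℕ) : ℝ) * (R:ℝ) ^ (Fintype.card V) := by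
        apply mul_le_mul_of_nonneg_right _ (le_of_lt hRVpos)
        have hsub : P.filter (fun φ => ((univ : Finset (Fin (2*τ))).image φ).card ≤ τ)
            ⊆ (univ : Finset (Fin (2*τ) → V)).filter
                (fun φ => ((univ : Finset (Fin (2*τ))).image φ).card ≤ τ) :=
          Finset.filter_subset_filter _ (Finset.subset_univ P)
        have := le_trans (Finset.card_le_card hsub) (count_lowimage (V := V) τ)
        exact_mod_cast this


open scoped Classical

variable {ι : Type} [Fintype ι] [DecidableEq ι]

def keyJ (J : Finset ι) (x : ι → ZMod 2) : ι → ZMod 2 :=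
  fun i => if i ∈ J then x i else 0

def FibJ (J : Finset ι) (w : ι → ZMod 2) : Finset (ι → ZMod 2) :=
  univ.filter (fun x => keyJ J x = w)

lemma sep_exists (X : Finset (ι → ZMod 2)) :
    ∃ J : Finset ι, J.card ≤ X.card * X.card ∧
      ∀ a ∈ X, ∀ b ∈ X, (∀ i ∈ J, a i = b i) → a = b := by
  have hd : ∀ p : (ι → ZMod 2) × (ι → ZMod 2), ∃ d : Finset ι,
      d.card ≤ 1 ∧ (p.1 ≠ p.2 → ∃ i ∈ d, p.1 i ≠ p.2 i) := by
    intro p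
    by_cases h : p.1 = p.2
    · exact ⟨∅, by simp, fun hne => absurd h hne⟩
    · obtain ⟨i, hi⟩ := Function.ne_iff.mp h
      exact ⟨{i}, by simp, fun _ => ⟨i, Finset.mem_singleton_self i, hi⟩⟩
  choose d hd1 hd2 using hd
  refine ⟨(X ×ˢ X).biUnion d, ?_, ?_⟩
  · calc ((X ×ˢ X).biUnion d).card ≤ ∑ p ∈ X ×ˢ X, (d p).card := Finset.card_biUnion_le
      _ ≤ ∑ _p ∈ X ×ˢ X, 1 := Finset.sum_le_sum (fun p _ => hd1 p)
      _ = X.card * X.card := by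
          rw [Finset.sum_const, smul_eq_mul, mul_one, Finset.card_product]
  · intro a ha b hb hagree
    by_contra hne
    obtain ⟨i, hi, hne2⟩ := hd2 (a, b) hne
    exact hne2 (hagree i (Finset.mem_biUnion.mpr ⟨(a,b), Finset.mem_product.mpr ⟨ha, hb⟩, hi⟩))

lemma mem_FibJ_agree {J : Finset ι} {w : ι → ZMod 2} {x : ι → ZMod 2}
    (hx : x ∈ FibJ J w) : ∀ i ∈ J, x i = w i := by
  intro i hi
  rw [FibJ, Finset.mem_filter] at hx
  have := congrFun hx.2 i
  rwa [keyJ, if_pos hi] at this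

lemma fib_card (J : Finset ι) (w : ι → ZMod 2) (hw : w ∈ univ.image (keyJ J)) :
    (FibJ J w).card = 2 ^ (Fintype.card ι - J.card) := by
  obtain ⟨z, -, hz⟩ := Finset.mem_image.mp hw
  have hw0 : ∀ i, i ∉ J → w i = 0 := by
    intro i hi
    rw [← hz, keyJ, if_neg hi]
  have hcard : Fintype.card ({ i // i ∉ J } → ZMod 2) = 2 ^ (Fintype.card ι - J.card) := by
    rw [Fintype.card_fun, ZMod.card]
    congr 1
    rw [Fintype.card_subtype_compl]
    congr 1
    exact Fintype.card_coe J
  rw [← hcard, ← Finset.card_univ]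
  apply Finset.card_bij' (fun x _ => fun i : { i // i ∉ J } => x i.1)
    (fun y _ => fun i => if h : i ∈ J then w i else y ⟨i, h⟩)
  · intro x hx
    exact Finset.mem_univ _
  · intro y hy
    rw [FibJ, Finset.mem_filter]
    refine ⟨Finset.mem_univ _, ?_⟩
    funext i
    by_cases h : i ∈ J
    · rw [keyJ, if_pos h, dif_pos h]
    · rw [keyJ, if_neg h]
      exact (hw0 i h).symm
  · intro x hx
    funext i
    by_cases h : i ∈ J
    · rw [dif_pos h]
      exact ((mem_FibJ_agree hx) i h).symm
    · rw [dif_neg h]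
  · intro y hy
    funext i
    simp only []
    rw [dif_neg i.2]

lemma image_key_card (J : Finset ι) :
    (univ.image (keyJ J)).card ≤ 2 ^ J.card := by
  have hcard : Fintype.card ({ i // i ∈ J } → ZMod 2) = 2 ^ J.card := by
    rw [Fintype.card_fun, ZMod.card]
    congr 1
    exact Fintype.card_coe J
  rw [← hcard, ← Finset.card_univ]
  apply Finset.card_le_card_of_injOn (fun w => fun i : { i // i ∈ J } => w i.1)
  · intro w hw
    exact Finset.mem_univ _
  · intro w1 hw1 w2 hw2 heq
    obtain ⟨z1, -, hz1⟩ := Finset.mem_image.mp hw1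
    obtain ⟨z2, -, hz2⟩ := Finset.mem_image.mp hw2
    funext i
    by_cases h : i ∈ J
    · exact congrFun heq ⟨i, h⟩
    · rw [← hz1, ← hz2, keyJ, keyJ, if_neg h, if_neg h]


noncomputable def NXr (R thr : ℕ) (X : Finset (ι → ZMod 2))
    (u : (ι → ZMod 2) → Fin R) : ℝ :=
  ∑ x : ι → ZMod 2, Yx R thr X x u

lemma perX (R thr : ℕ) (hR : 0 < R) (hthr : thr ≤ R) (δ₂ : ℝ) (hδ₂ : 0 < δ₂)
    (m' τ : ℕ) (X : Finset (ι → ZMod 2)) (hXcard : X.card ≤ m') :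
    ((univ.filter (fun u : (ι → ZMod 2) → Fin R =>
        δ₂ * (Fintype.card (ι → ZMod 2) : ℝ)
          < |NXr R thr X u - ((thr:ℝ)/R) ^ X.card * (Fintype.card (ι → ZMod 2) : ℝ)|)).card : ℝ)
      * (δ₂ * (2:ℝ) ^ (Fintype.card ι - m'*m')) ^ (2*τ)
    ≤ (2:ℝ) ^ (m'*m') * ((τ ^ (2*τ) * (Fintype.card (ι → ZMod 2)) ^ τ : ℕ) : ℝ)
        * (R:ℝ) ^ (Fintype.card (ι → ZMod 2)) := by
  classical
  obtain ⟨J, hJcard, hJsep⟩ := sep_exists X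
  have hJm : J.card ≤ m'*m' := le_trans hJcard (Nat.mul_le_mul hXcard hXcard)
  set q : ℝ := (thr:ℝ)/R with hq
  set k := X.card with hk
  set N : ℝ := (Fintype.card (ι → ZMod 2) : ℝ) with hN
  set fibim := univ.image (keyJ J) with hfibim
  set Sw : (ι → ZMod 2) → ((ι → ZMod 2) → Fin R) → ℝ :=
    fun w u => ∑ x ∈ FibJ J w, Ybar R thr X x u with hSw
  set lam : ℝ := δ₂ * (2:ℝ) ^ (Fintype.card ι - m'*m') with hlam
  have hlam_pos : 0 < lam := by rw [hlam]; positivity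
  have h2 : N = ∑ w ∈ fibim, ((FibJ J w).card : ℝ) := by
    have hh := Finset.card_eq_sum_card_fiberwise
      (fun (x : ι → ZMod 2) (_ : x ∈ (univ : Finset (ι → ZMod 2))) =>
        Finset.mem_image_of_mem (keyJ J) (Finset.mem_univ x))
    rw [Finset.card_univ] at hh
    rw [hN]
    rw [hh]
    push_cast
    rfl
  have hdecomp : ∀ u, NXr R thr X u - q ^ k * N = ∑ w ∈ fibim, Sw w u := by
    intro u
    have h1 : NXr R thr X u = ∑ w ∈ fibim, ∑ x ∈ FibJ J w, Yx R thr X x u := by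
      rw [NXr]
      exact (Finset.sum_fiberwise_of_maps_to
        (fun x _ => Finset.mem_image_of_mem (keyJ J) (Finset.mem_univ x)) _).symm
    have h3 : ∀ w, Sw w u
        = (∑ x ∈ FibJ J w, Yx R thr X x u) - ((FibJ J w).card : ℝ) * q ^ k := by
      intro w
      rw [hSw]
      simp only [Ybar, Finset.sum_sub_distrib, Finset.sum_const, nsmul_eq_mul]
      rfl
    rw [Finset.sum_congr rfl (fun w _ => h3 w), Finset.sum_sub_distrib, ← h1,
      ← Finset.sum_mul, ← h2]
    ring
  have hsubset : univ.filter (fun u : (ι → ZMod 2) → Fin R =>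
        δ₂ * N < |NXr R thr X u - q ^ k * N|)
      ⊆ fibim.biUnion (fun w => univ.filter
          (fun u => δ₂ * ((FibJ J w).card:ℝ) < |Sw w u|)) := by
    intro u hu
    rw [Finset.mem_filter] at hu
    by_contra hnot
    rw [Finset.mem_biUnion] at hnot
    push_neg at hnot
    have hgood : ∀ w ∈ fibim, |Sw w u| ≤ δ₂ * ((FibJ J w).card:ℝ) := by
      intro w hw
      have hthis := hnot w hw
      rw [Finset.mem_filter] at hthis
      push_neg at hthis
      exact hthis (Finset.mem_univ u)
    have hcontra : |NXr R thr X u - q ^ k * N| ≤ δ₂ * N := by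
      rw [hdecomp u]
      calc |∑ w ∈ fibim, Sw w u| ≤ ∑ w ∈ fibim, |Sw w u| :=
            Finset.abs_sum_le_sum_abs _ _
        _ ≤ ∑ w ∈ fibim, δ₂ * ((FibJ J w).card:ℝ) := Finset.sum_le_sum hgood
        _ = δ₂ * N := by rw [← Finset.mul_sum, ← h2]
    linarith [hu.2]
  have hperw : ∀ w ∈ fibim,
      ((univ.filter (fun u : (ι → ZMod 2) → Fin R =>
          δ₂ * ((FibJ J w).card:ℝ) < |Sw w u|)).card : ℝ) * lam ^ (2*τ)
      ≤ ((τ ^ (2*τ) * (Fintype.card (ι → ZMod 2)) ^ τ : ℕ) : ℝ)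
          * (R:ℝ) ^ (Fintype.card (ι → ZMod 2)) := by
    intro w hw
    have hMw : ((FibJ J w).card : ℝ) = (2:ℝ) ^ (Fintype.card ι - J.card) := by
      rw [fib_card J w hw]
      push_cast
      ring
    have hMw_pos : (0:ℝ) < ((FibJ J w).card : ℝ) := by
      rw [hMw]; positivity
    have hlam_le : lam ≤ δ₂ * ((FibJ J w).card:ℝ) := by
      rw [hlam, hMw]
      apply mul_le_mul_of_nonneg_left _ hδ₂.le
      exact pow_le_pow_right₀ one_le_two (Nat.sub_le_sub_left hJm _)
    have hsep' : ∀ x ∈ FibJ J w, ∀ y ∈ FibJ J w, ∀ s ∈ X, ∀ t ∈ X,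
        x + s = y + t → x = y := by
      intro x hx y hy s hs t ht heq
      have hst : s = t := by
        apply hJsep s hs t ht
        intro i hi
        have hxw := mem_FibJ_agree hx i hi
        have hyw := mem_FibJ_agree hy i hi
        have hpt := congrFun heq i
        simp only [Pi.add_apply] at hpt
        rw [hxw, hyw] at hpt
        exact add_left_cancel hpt
      rw [hst] at heq
      exact add_right_cancel heq
    have hmom := moment_bound (V := ι → ZMod 2) hR hthr X (FibJ J w) τ hsep'
    have hcheb : ∀ u ∈ univ.filter (fun u : (ι → ZMod 2) → Fin R =>
          δ₂ * ((FibJ J w).card:ℝ) < |Sw w u|),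
        (δ₂ * ((FibJ J w).card:ℝ)) ^ (2*τ) ≤ (Sw w u) ^ (2*τ) := by
      intro u hu
      rw [Finset.mem_filter] at hu
      have h1 : (δ₂ * ((FibJ J w).card:ℝ)) ^ (2*τ) ≤ |Sw w u| ^ (2*τ) :=
        pow_le_pow_left₀ (by positivity) hu.2.le _
      rwa [Even.pow_abs ⟨τ, by ring⟩] at h1
    have heven : ∀ u : (ι → ZMod 2) → Fin R, (0:ℝ) ≤ (Sw w u) ^ (2*τ) :=
      fun u => Even.pow_nonneg ⟨τ, by ring⟩ _
    calc ((univ.filter (fun u : (ι → ZMod 2) → Fin R =>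
          δ₂ * ((FibJ J w).card:ℝ) < |Sw w u|)).card : ℝ) * lam ^ (2*τ)
        ≤ ((univ.filter (fun u : (ι → ZMod 2) → Fin R =>
          δ₂ * ((FibJ J w).card:ℝ) < |Sw w u|)).card : ℝ)
            * (δ₂ * ((FibJ J w).card:ℝ)) ^ (2*τ) := by
          apply mul_le_mul_of_nonneg_left _ (Nat.cast_nonneg _)
          exact pow_le_pow_left₀ hlam_pos.le hlam_le _
      _ = ∑ u ∈ univ.filter (fun u : (ι → ZMod 2) → Fin R =>
          δ₂ * ((FibJ J w).card:ℝ) < |Sw w u|), (δ₂ * ((FibJ J w).card:ℝ)) ^ (2*τ) := by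
          rw [Finset.sum_const, nsmul_eq_mul]
      _ ≤ ∑ u ∈ univ.filter (fun u : (ι → ZMod 2) → Fin R =>
          δ₂ * ((FibJ J w).card:ℝ) < |Sw w u|), (Sw w u) ^ (2*τ) :=
          Finset.sum_le_sum hcheb
      _ ≤ ∑ u : (ι → ZMod 2) → Fin R, (Sw w u) ^ (2*τ) :=
          Finset.sum_le_sum_of_subset_of_nonneg (Finset.filter_subset _ _)
            (fun u _ _ => heven u)
      _ ≤ _ := hmom
  have hfibim_card : ((fibim.card : ℝ)) ≤ (2:ℝ) ^ (m'*m') := by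
    have h1 : fibim.card ≤ 2 ^ J.card := image_key_card J
    have h2' : (2:ℕ) ^ J.card ≤ 2 ^ (m'*m') := Nat.pow_le_pow_right (by norm_num) hJm
    have := le_trans h1 h2'
    calc ((fibim.card : ℝ)) ≤ ((2 ^ (m'*m') : ℕ) : ℝ) := by exact_mod_cast this
      _ = (2:ℝ) ^ (m'*m') := by push_cast; ring
  have hRHS_nonneg : (0:ℝ) ≤ ((τ ^ (2*τ) * (Fintype.card (ι → ZMod 2)) ^ τ : ℕ) : ℝ)
      * (R:ℝ) ^ (Fintype.card (ι → ZMod 2)) := by positivity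
  calc ((univ.filter (fun u : (ι → ZMod 2) → Fin R =>
        δ₂ * N < |NXr R thr X u - q ^ k * N|)).card : ℝ) * lam ^ (2*τ)
      ≤ ((fibim.biUnion (fun w => univ.filter
          (fun u => δ₂ * ((FibJ J w).card:ℝ) < |Sw w u|))).card : ℝ) * lam ^ (2*τ) := by
        apply mul_le_mul_of_nonneg_right _ (by positivity)
        exact_mod_cast Finset.card_le_card hsubset
    _ ≤ (∑ w ∈ fibim, ((univ.filter
          (fun u : (ι → ZMod 2) → Fin R =>
            δ₂ * ((FibJ J w).card:ℝ) < |Sw w u|)).card : ℝ)) * lam ^ (2*τ) := by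
        apply mul_le_mul_of_nonneg_right _ (by positivity)
        exact_mod_cast Finset.card_biUnion_le
    _ = ∑ w ∈ fibim, ((univ.filter
          (fun u : (ι → ZMod 2) → Fin R =>
            δ₂ * ((FibJ J w).card:ℝ) < |Sw w u|)).card : ℝ) * lam ^ (2*τ) :=
        Finset.sum_mul _ _ _
    _ ≤ ∑ _w ∈ fibim, ((τ ^ (2*τ) * (Fintype.card (ι → ZMod 2)) ^ τ : ℕ) : ℝ)
          * (R:ℝ) ^ (Fintype.card (ι → ZMod 2)) := Finset.sum_le_sum hperw
    _ = (fibim.card : ℝ) * (((τ ^ (2*τ) * (Fintype.card (ι → ZMod 2)) ^ τ : ℕ) : ℝ)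
          * (R:ℝ) ^ (Fintype.card (ι → ZMod 2))) := by
        rw [Finset.sum_const, nsmul_eq_mul]
    _ ≤ (2:ℝ) ^ (m'*m') * (((τ ^ (2*τ) * (Fintype.card (ι → ZMod 2)) ^ τ : ℕ) : ℝ)
          * (R:ℝ) ^ (Fintype.card (ι → ZMod 2))) :=
        mul_le_mul_of_nonneg_right hfibim_card hRHS_nonneg
    _ = _ := by ring


lemma seven_le (c : ℕ) : 7*c+10 ≤ 2^(3*c+4) := by
  induction c with
  | zero => norm_num
  | succ c ih =>
    have h1 : 7*(c+1)+10 ≤ 2*(7*c+10) := by omega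
    have h2 : 2*(7*c+10) ≤ 2*2^(3*c+4) := by omega
    have h3 : (2:ℕ)*2^(3*c+4) ≤ 2^(3*(c+1)+4) := by
      have he : 3*(c+1)+4 = (3*c+4)+3 := by ring
      rw [he]
      have hpa : (2:ℕ)^((3*c+4)+3) = 2^(3*c+4) * 2^3 := pow_add 2 _ 3
      have h4 : (1:ℕ) ≤ 2^(3*c+4) := Nat.one_le_two_pow
      omega
    omega

lemma growth (c : ℕ) : ∀ n, 7*c+8 ≤ n → c*(n+2)^2 ≤ 2^n := by
  have base : c*((7*c+8)+2)^2 ≤ 2^(7*c+8) := by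
    have h1' : c ≤ 2^c := (Nat.lt_two_pow_self (n := c)).le
    have h2 : (7*c+10)^2 ≤ (2^(3*c+4))^2 := Nat.pow_le_pow_left (seven_le c) 2
    have h3 : (2^(3*c+4):ℕ)^2 = 2^(6*c+8) := by
      rw [← pow_mul]
      congr 1
      ring
    calc c*((7*c+8)+2)^2 = c * (7*c+10)^2 := by ring_nf
      _ ≤ 2^c * 2^(6*c+8) := Nat.mul_le_mul h1' (h2.trans_eq h3)
      _ = 2^(7*c+8) := by rw [← pow_add]; congr 1; ring
  intro n hn
  induction n, hn using Nat.le_induction with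
  | base => exact base
  | succ n hn ih =>
    have hsq : ((n+1)+2)^2 ≤ 2*(n+2)^2 := by nlinarith
    calc c*((n+1)+2)^2 ≤ c*(2*(n+2)^2) := Nat.mul_le_mul_left c hsq
      _ = 2*(c*(n+2)^2) := by ring
      _ ≤ 2*2^n := by omega
      _ = 2^(n+1) := by rw [pow_succ]; ring

lemma abs_pow_sub_pow_le {p q : ℝ} (hp : 0 ≤ p) (hp1 : p ≤ 1) (hq : 0 ≤ q) (hq1 : q ≤ 1)
    (k : ℕ) : |q^k - p^k| ≤ k * |q - p| := by
  induction k with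
  | zero => simp
  | succ k ih =>
    have hid : q^(k+1) - p^(k+1) = q^k * (q - p) + p * (q^k - p^k) := by ring
    have hqk : |q^k| ≤ 1 := by
      rw [abs_of_nonneg (by positivity)]
      exact pow_le_one₀ hq hq1
    have hpabs : |p| ≤ 1 := by rwa [abs_of_nonneg hp]
    calc |q^(k+1) - p^(k+1)| ≤ |q^k * (q - p)| + |p * (q^k - p^k)| := by
          rw [hid]; exact abs_add_le _ _
      _ = |q^k| * |q - p| + |p| * |q^k - p^k| := by rw [abs_mul, abs_mul]
      _ ≤ 1 * |q - p| + 1 * (k * |q - p|) := by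
          have h1 : |q^k| * |q - p| ≤ 1 * |q - p| :=
            mul_le_mul_of_nonneg_right hqk (abs_nonneg _)
          have h2 : |p| * |q^k - p^k| ≤ 1 * (k * |q - p|) := by
            apply mul_le_mul hpabs ih (abs_nonneg _) one_pos.le
          linarith
      _ = (k+1 : ℕ) * |q - p| := by push_cast; ring

lemma cand_count {V : Type} [Fintype V] [DecidableEq V] (m' : ℕ) :
    ((univ : Finset (Finset V)).filter (fun X => X.Nonempty ∧ X.card ≤ m')).card
      ≤ (Fintype.card V)^m' := by
  classical
  have hsub : (univ : Finset (Finset V)).filter (fun X => X.Nonempty ∧ X.card ≤ m')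
      ⊆ (univ : Finset (Fin m' → V)).image (fun h => univ.image h) := by
    intro X hX
    rw [Finset.mem_filter] at hX
    obtain ⟨-, ⟨x₀, hx₀⟩, hcard⟩ := hX
    set l := X.toList with hl
    have hlen : l.length ≤ m' := by
      rw [hl, Finset.length_toList]
      exact hcard
    refine Finset.mem_image.mpr ⟨fun j => l.getD j x₀, Finset.mem_univ _, ?_⟩
    ext y
    constructor
    · intro hy
      obtain ⟨j, -, hj⟩ := Finset.mem_image.mp hy
      rw [← hj]
      by_cases hjl : (j:ℕ) < l.length
      · rw [List.getD_eq_getElem l x₀ hjl]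
        have : l[(j:ℕ)] ∈ l := List.getElem_mem hjl
        exact Finset.mem_toList.mp this
      · rw [List.getD_eq_default l x₀ (le_of_not_gt hjl)]
        exact hx₀
    · intro hy
      have hyl : y ∈ l := by rw [hl, Finset.mem_toList]; exact hy
      have hidx : List.idxOf y l < l.length := List.idxOf_lt_length_iff.mpr hyl
      refine Finset.mem_image.mpr ⟨⟨List.idxOf y l, lt_of_lt_of_le hidx hlen⟩,
        Finset.mem_univ _, ?_⟩
      rw [List.getD_eq_getElem l x₀ hidx]
      exact List.getElem_idxOf hidx
  calc _ ≤ ((univ : Finset (Fin m' → V)).image (fun h => univ.image h)).card :=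
        Finset.card_le_card hsub
    _ ≤ (univ : Finset (Fin m' → V)).card := Finset.card_image_le
    _ = (Fintype.card V)^m' := by
        rw [Finset.card_univ, Fintype.card_fun, Fintype.card_fin]

end ExistIndepAux


section FINAL

open Set Pointwise ExistIndepAux Finset

set_option maxHeartbeats 2000000 in
/-- Theorem 3.2 of the paper: for every `m` and `0 < δ < ε < 1` there is `n` such that
for every finite index set `I` with `|I| > n` there is `C ⊆ 2^I` of relative size
roughly `1 − ε` such that all families of at most `m` translates of `C` are
probabilistically independent with error `δ`. -/
theorem exists_independent_translates (m : ℕ) (δ ε : ℝ)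
    (hδ0 : 0 < δ) (hδε : δ < ε) (hε1 : ε < 1) :
    ∃ n : ℕ, ∀ (ι : Type) [Fintype ι], n < Fintype.card ι →
      ∃ C : Set (ι → ZMod 2),
        1 - ε - δ ≤ (C.ncard : ℝ) / 2 ^ Fintype.card ι ∧
        (C.ncard : ℝ) / 2 ^ Fintype.card ι ≤ 1 - ε + δ ∧
        ∀ X : Set (ι → ZMod 2), X.ncard ≤ m →
          |((⋂ s ∈ X, (C + {s})).ncard : ℝ) / 2 ^ Fintype.card ι
            - (1 - ε) ^ X.ncard| < δ := by
  classical
  set p : ℝ := 1 - ε with hp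
  have hp0 : 0 < p := by rw [hp]; linarith
  have hp1 : p < 1 := by rw [hp]; linarith
  set m' : ℕ := m + 1 with hm'
  have hm'pos : 0 < m' := Nat.succ_pos m
  set δ₂ : ℝ := δ / 2 with hδ₂
  have hδ₂pos : 0 < δ₂ := by positivity
  set R : ℕ := ⌈4 * (m' : ℝ) / δ⌉₊ with hRdef
  have hRge : 4 * (m' : ℝ) / δ ≤ R := Nat.le_ceil _
  have hRpos : 0 < R := by
    rw [hRdef]
    apply Nat.ceil_pos.mpr
    positivity
  have hRposR : (0:ℝ) < R := by exact_mod_cast hRpos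
  set thr : ℕ := ⌊p * R⌋₊ with hthrdef
  have hthr_le : thr ≤ R := by
    rw [hthrdef]
    calc ⌊p * (R:ℝ)⌋₊ ≤ ⌊(R:ℝ)⌋₊ := Nat.floor_le_floor (by nlinarith)
      _ = R := Nat.floor_natCast R
  set q : ℝ := (thr : ℝ) / R with hqdef
  have hq_nonneg : 0 ≤ q := by rw [hqdef]; positivity
  have hq_le_one : q ≤ 1 := by
    rw [hqdef, div_le_one hRposR]
    exact_mod_cast hthr_le
  have hq_le_p : q ≤ p := by
    rw [hqdef, div_le_iff₀ hRposR]
    rw [hthrdef]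
    exact Nat.floor_le (by positivity)
  have hq_ge : p - 1 / R ≤ q := by
    have h1 : p * R - 1 < (thr:ℝ) := by
      rw [hthrdef]
      exact Nat.sub_one_lt_floor _
    have hfield : (p - 1 / (R:ℝ)) * R = p * R - 1 := by field_simp
    rw [hqdef, le_div_iff₀ hRposR, hfield]
    linarith
  have hqp : |q - p| ≤ δ / (4 * m') := by
    have h1 : 1 / (R:ℝ) ≤ δ / (4 * m') := by
      rw [div_le_div_iff₀ hRposR (by positivity)]
      have h2 := (div_le_iff₀ hδ0).mp hRge
      nlinarith
    rw [abs_sub_comm, abs_of_nonneg (by linarith)]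
    linarith
  set M2 : ℕ := m' * m' with hM2
  set D : ℕ := M2 + m' + 1 with hD
  set K : ℝ := (D:ℝ)^2 * 2^(2*M2+1) / δ₂^2 with hK
  obtain ⟨c, hc⟩ := exists_nat_ge K
  refine ⟨7*c + 8 + M2 + 1, ?_⟩
  intro ι instι hn
  letI : DecidableEq ι := Classical.decEq ι
  set n : ℕ := Fintype.card ι with hn_def
  have hnM2 : M2 ≤ n := by omega
  have hn78 : 7*c+8 ≤ n := by omega
  set τ : ℕ := n * m' + 2*M2 + 1 with hτdef
  have hτ1 : 1 ≤ τ := by omega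
  have hτR : (0:ℝ) < (τ:ℝ) := by exact_mod_cast hτ1
  have hτle : (τ:ℝ) ≤ ((n:ℝ)+2) * (D:ℝ) := by
    rw [hτdef, hD, hM2]
    push_cast
    nlinarith [Nat.cast_nonneg (α := ℝ) n, Nat.cast_nonneg (α := ℝ) m']
  have hpow_pos : (0:ℝ) < 2^(2*M2+1) := by positivity
  have hCOND : (τ:ℝ)^2 * 2^(2*M2+1) ≤ δ₂^2 * 2^n := by
    have hτ2 : (τ:ℝ)^2 ≤ ((n:ℝ)+2)^2 * (D:ℝ)^2 := by
      have h0 : (0:ℝ) ≤ (τ:ℝ) := Nat.cast_nonneg τ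
      calc (τ:ℝ)^2 ≤ (((n:ℝ)+2) * (D:ℝ))^2 := by
            apply pow_le_pow_left₀ h0 hτle
        _ = ((n:ℝ)+2)^2 * (D:ℝ)^2 := by ring
    have hδ₂sq : (δ₂:ℝ)^2 ≠ 0 := by positivity
    have hKeq : (D:ℝ)^2 * 2^(2*M2+1) = K * δ₂^2 := by
      rw [hK, div_mul_cancel₀ _ hδ₂sq]
    have hgrowR : (c:ℝ) * ((n:ℝ)+2)^2 ≤ 2^n := by
      exact_mod_cast ExistIndepAux.growth c n hn78
    calc (τ:ℝ)^2 * 2^(2*M2+1)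
        ≤ (((n:ℝ)+2)^2 * (D:ℝ)^2) * 2^(2*M2+1) :=
          mul_le_mul_of_nonneg_right hτ2 hpow_pos.le
      _ = δ₂^2 * (K * ((n:ℝ)+2)^2) := by rw [mul_assoc, hKeq]; ring
      _ ≤ δ₂^2 * ((c:ℝ) * ((n:ℝ)+2)^2) := by
          apply mul_le_mul_of_nonneg_left _ (by positivity)
          exact mul_le_mul_of_nonneg_right hc (sq_nonneg _)
      _ ≤ δ₂^2 * 2^n := mul_le_mul_of_nonneg_left hgrowR (by positivity)
  have hNN : Fintype.card (ι → ZMod 2) = 2^n := by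
    rw [Fintype.card_fun, ZMod.card]
  have hNcast : ((Fintype.card (ι → ZMod 2)):ℝ) = (2:ℝ)^n := by
    rw [hNN]; push_cast; ring
  have hNpos : (0:ℝ) < (2:ℝ)^n := by positivity
  set lam : ℝ := δ₂ * (2:ℝ)^(n - M2) with hlamdef
  have hlampos : (0:ℝ) < lam := by rw [hlamdef]; positivity
  set Rbig : ℝ := (R:ℝ)^(Fintype.card (ι → ZMod 2)) with hRbig
  have hRbigpos : (0:ℝ) < Rbig := by rw [hRbig]; positivity
  set CAND := (univ : Finset (Finset (ι → ZMod 2))).filter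
    (fun X => X.Nonempty ∧ X.card ≤ m') with hCAND
  set Bad : Finset (ι → ZMod 2) → Finset ((ι → ZMod 2) → Fin R) := fun X =>
    univ.filter (fun uu : (ι → ZMod 2) → Fin R =>
      δ₂ * ((Fintype.card (ι → ZMod 2)) : ℝ)
        < |ExistIndepAux.NXr R thr X uu
            - ((thr:ℝ)/R) ^ X.card * ((Fintype.card (ι → ZMod 2)) : ℝ)|) with hBad
  have hperX : ∀ X ∈ CAND, ((Bad X).card : ℝ) * lam ^ (2*τ)
      ≤ (2:ℝ) ^ M2 * ((τ ^ (2*τ) * (Fintype.card (ι → ZMod 2)) ^ τ : ℕ) : ℝ) * Rbig := by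
    intro X hX
    rw [hCAND, Finset.mem_filter] at hX
    exact ExistIndepAux.perX R thr hRpos hthr_le δ₂ hδ₂pos m' τ X hX.2.2
  -- numeric inequality
  have hA : (2:ℝ)^(n - M2) * 2^M2 = 2^n := by
    rw [← pow_add]
    congr 1
    omega
  have hstep : 2 * ((τ:ℝ)^2 * (2:ℝ)^n) ≤ δ₂^2 * ((2:ℝ)^(n-M2))^2 := by
    have hb2 : (2:ℝ)^(2*M2+1) = ((2:ℝ)^M2)^2 * 2 := by
      rw [← pow_mul, ← pow_succ]
      congr 1
      ring
    have key : (2 * ((τ:ℝ)^2 * (2:ℝ)^n)) * ((2:ℝ)^M2)^2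
        ≤ (δ₂^2 * ((2:ℝ)^(n-M2))^2) * ((2:ℝ)^M2)^2 := by
      have e1 : (δ₂^2 * ((2:ℝ)^(n-M2))^2) * ((2:ℝ)^M2)^2 = δ₂^2 * ((2:ℝ)^n)^2 := by
        rw [mul_assoc, ← mul_pow, hA]
      have e2 : (2 * ((τ:ℝ)^2 * (2:ℝ)^n)) * ((2:ℝ)^M2)^2
          = ((τ:ℝ)^2 * (((2:ℝ)^M2)^2 * 2)) * (2:ℝ)^n := by ring
      rw [e1, e2, ← hb2]
      calc ((τ:ℝ)^2 * ((2:ℝ)^(2*M2+1))) * (2:ℝ)^n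
          ≤ (δ₂^2 * (2:ℝ)^n) * (2:ℝ)^n := mul_le_mul_of_nonneg_right hCOND hNpos.le
        _ = δ₂^2 * ((2:ℝ)^n)^2 := by ring
    exact le_of_mul_le_mul_right key (by positivity)
  have hNUM0 : ((2:ℝ)^n)^m' * ((2:ℝ)^M2 * ((τ:ℝ)^(2*τ) * ((2:ℝ)^n)^τ)) < lam^(2*τ) := by
    have hfold : ((2:ℝ)^n)^m' * ((2:ℝ)^M2 * ((τ:ℝ)^(2*τ) * ((2:ℝ)^n)^τ))
        = (2:ℝ)^(n*m'+M2) * ((τ:ℝ)^2 * (2:ℝ)^n)^τ := by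
      rw [pow_add, ← pow_mul, pow_mul (τ:ℝ) 2 τ, mul_pow]
      ring
    have hrhs : lam^(2*τ) = (δ₂^2 * ((2:ℝ)^(n-M2))^2)^τ := by
      rw [hlamdef, pow_mul]
      congr 1
      ring
    rw [hfold, hrhs]
    have hbase_pos : (0:ℝ) < (τ:ℝ)^2 * (2:ℝ)^n := by positivity
    calc (2:ℝ)^(n*m'+M2) * ((τ:ℝ)^2 * (2:ℝ)^n)^τ
        < (2:ℝ)^τ * ((τ:ℝ)^2 * (2:ℝ)^n)^τ := by
          apply mul_lt_mul_of_pos_right _ (pow_pos hbase_pos τ)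
          exact pow_lt_pow_right₀ one_lt_two (by omega)
      _ = (2 * ((τ:ℝ)^2 * (2:ℝ)^n))^τ := by rw [← mul_pow]
      _ ≤ (δ₂^2 * ((2:ℝ)^(n-M2))^2)^τ := pow_le_pow_left₀ (by positivity) hstep τ
  have hcastBig : ((τ ^ (2*τ) * (Fintype.card (ι → ZMod 2)) ^ τ : ℕ) : ℝ)
      = (τ:ℝ)^(2*τ) * ((2:ℝ)^n)^τ := by
    rw [hNN]
    push_cast
    ring
  have hcardCAND : ((CAND.card : ℕ) : ℝ) ≤ ((2:ℝ)^n)^m' := by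
    have h1 := ExistIndepAux.cand_count (V := ι → ZMod 2) m'
    rw [hNN] at h1
    calc ((CAND.card : ℕ) : ℝ) ≤ (((2^n)^m' : ℕ) : ℝ) := by exact_mod_cast h1
      _ = ((2:ℝ)^n)^m' := by norm_cast
  have hRHS1_nonneg : (0:ℝ) ≤ (2:ℝ) ^ M2
      * ((τ ^ (2*τ) * (Fintype.card (ι → ZMod 2)) ^ τ : ℕ) : ℝ) * Rbig := by
    positivity
  have htotR : (∑ X ∈ CAND, ((Bad X).card : ℝ)) < Rbig := by
    have hsum : (∑ X ∈ CAND, ((Bad X).card : ℝ)) * lam^(2*τ)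
        ≤ (CAND.card : ℝ) * ((2:ℝ) ^ M2
            * ((τ ^ (2*τ) * (Fintype.card (ι → ZMod 2)) ^ τ : ℕ) : ℝ) * Rbig) := by
      rw [Finset.sum_mul]
      calc ∑ X ∈ CAND, ((Bad X).card : ℝ) * lam^(2*τ)
          ≤ ∑ _X ∈ CAND, (2:ℝ) ^ M2
              * ((τ ^ (2*τ) * (Fintype.card (ι → ZMod 2)) ^ τ : ℕ) : ℝ) * Rbig :=
            Finset.sum_le_sum hperX
        _ = (CAND.card : ℝ) * ((2:ℝ) ^ M2
              * ((τ ^ (2*τ) * (Fintype.card (ι → ZMod 2)) ^ τ : ℕ) : ℝ) * Rbig) := by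
            rw [Finset.sum_const, nsmul_eq_mul]
    have hNUM : (CAND.card : ℝ) * ((2:ℝ) ^ M2
        * ((τ ^ (2*τ) * (Fintype.card (ι → ZMod 2)) ^ τ : ℕ) : ℝ) * Rbig)
        < lam^(2*τ) * Rbig := by
      calc (CAND.card : ℝ) * ((2:ℝ) ^ M2
            * ((τ ^ (2*τ) * (Fintype.card (ι → ZMod 2)) ^ τ : ℕ) : ℝ) * Rbig)
          ≤ ((2:ℝ)^n)^m' * ((2:ℝ) ^ M2
            * ((τ ^ (2*τ) * (Fintype.card (ι → ZMod 2)) ^ τ : ℕ) : ℝ) * Rbig) :=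
            mul_le_mul_of_nonneg_right hcardCAND hRHS1_nonneg
        _ = (((2:ℝ)^n)^m' * ((2:ℝ)^M2 * ((τ:ℝ)^(2*τ) * ((2:ℝ)^n)^τ))) * Rbig := by
            rw [hcastBig]; ring
        _ < lam^(2*τ) * Rbig := mul_lt_mul_of_pos_right hNUM0 hRbigpos
    have hfinal := lt_of_le_of_lt hsum hNUM
    have hlp : (0:ℝ) < lam^(2*τ) := pow_pos hlampos _
    rw [mul_comm (lam^(2*τ)) Rbig] at hfinal
    exact lt_of_mul_lt_mul_right hfinal hlp.le
  -- existence of a good u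
  have hexists : ∃ u : (ι → ZMod 2) → Fin R, ∀ X ∈ CAND, u ∉ Bad X := by
    by_contra hno
    push_neg at hno
    have hsub : (univ : Finset ((ι → ZMod 2) → Fin R)) ⊆ CAND.biUnion Bad := by
      intro uu _
      obtain ⟨X, hX, hu⟩ := hno uu
      exact Finset.mem_biUnion.mpr ⟨X, hX, hu⟩
    have h1 : Fintype.card ((ι → ZMod 2) → Fin R) ≤ ∑ X ∈ CAND, (Bad X).card := by
      calc Fintype.card ((ι → ZMod 2) → Fin R)
          = (univ : Finset ((ι → ZMod 2) → Fin R)).card := (Finset.card_univ).symm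
        _ ≤ (CAND.biUnion Bad).card := Finset.card_le_card hsub
        _ ≤ ∑ X ∈ CAND, (Bad X).card := Finset.card_biUnion_le
    have h2 : ((Fintype.card ((ι → ZMod 2) → Fin R)):ℝ) ≤ ∑ X ∈ CAND, ((Bad X).card:ℝ) := by
      push_cast
      exact_mod_cast h1
    have h3 : ((Fintype.card ((ι → ZMod 2) → Fin R)):ℝ) = Rbig := by
      rw [ExistIndepAux.card_Omega, hRbig]
      push_cast
      ring
    rw [h3] at h2
    linarith
  obtain ⟨u, hu⟩ := hexists
  -- the set C
  set C : Set (ι → ZMod 2) := {x | ((u x : ℕ)) < thr} with hC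
  have haddself : ∀ a : ι → ZMod 2, a + a = 0 := by
    intro a
    funext i
    exact CharTwo.add_self_eq_zero (a i)
  have hmem_add : ∀ (s x : ι → ZMod 2),
      x ∈ C + ({s} : Set (ι → ZMod 2)) ↔ ((u (x + s) : ℕ) < thr) := by
    intro s x
    rw [Set.mem_add]
    constructor
    · rintro ⟨c0, hc0, s0, hs0, heq⟩
      rw [Set.mem_singleton_iff] at hs0
      rw [hs0] at heq
      have hc0x : c0 = x + s := by
        rw [← heq, add_assoc, haddself, add_zero]
      rw [hC, Set.mem_setOf_eq] at hc0
      rwa [hc0x] at hc0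
    · intro h
      refine ⟨x + s, ?_, s, Set.mem_singleton s, ?_⟩
      · rw [hC, Set.mem_setOf_eq]
        exact h
      · rw [add_assoc, haddself, add_zero]
  -- goodness in quantitative form
  have hkey : ∀ Xf : Finset (ι → ZMod 2), Xf ∈ CAND →
      |((univ.filter (fun x : ι → ZMod 2 =>
          ∀ s ∈ Xf, ((u (x + s)) : ℕ) < thr)).card : ℝ) / (2:ℝ)^n - q ^ Xf.card| ≤ δ₂ := by
    intro Xf hXf
    have hgood := hu Xf hXf
    rw [hBad] at hgood
    simp only [Finset.mem_filter, Finset.mem_univ, true_and, not_lt] at hgood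
    have hNXr : ExistIndepAux.NXr R thr Xf u
        = ((univ.filter (fun x : ι → ZMod 2 =>
            ∀ s ∈ Xf, ((u (x + s)) : ℕ) < thr)).card : ℝ) := by
      rw [ExistIndepAux.NXr]
      rw [Finset.sum_congr rfl (fun x _ => ExistIndepAux.Yx_eq_boole Xf x u)]
      rw [Finset.sum_boole]
    rw [hNXr, hNcast] at hgood
    have heq : ((univ.filter (fun x : ι → ZMod 2 =>
          ∀ s ∈ Xf, ((u (x + s)) : ℕ) < thr)).card : ℝ) / (2:ℝ)^n - q ^ Xf.card
        = (((univ.filter (fun x : ι → ZMod 2 =>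
          ∀ s ∈ Xf, ((u (x + s)) : ℕ) < thr)).card : ℝ) - q ^ Xf.card * (2:ℝ)^n) / (2:ℝ)^n := by
      field_simp
    rw [heq, abs_div, abs_of_pos hNpos, div_le_iff₀ hNpos, hqdef]
    exact hgood
  have hqppow : ∀ k : ℕ, k ≤ m' → |q ^ k - p ^ k| ≤ δ / 4 := by
    intro k hk
    have h1 := ExistIndepAux.abs_pow_sub_pow_le hp0.le hp1.le hq_nonneg hq_le_one k
    have h2 : (k:ℝ) * |q - p| ≤ (m':ℝ) * (δ / (4 * m')) := by
      apply mul_le_mul (by exact_mod_cast hk) hqp (abs_nonneg _) (Nat.cast_nonneg m')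
    have h3 : (m':ℝ) * (δ / (4 * m')) = δ / 4 := by
      have hm'ne : (m':ℝ) ≠ 0 := by positivity
      field_simp
    calc |q ^ k - p ^ k| ≤ (k:ℝ) * |q - p| := h1
      _ ≤ δ / 4 := by rw [← h3]; exact h2
  -- the singleton {0} gives the density bound
  have h0CAND : ({0} : Finset (ι → ZMod 2)) ∈ CAND := by
    rw [hCAND, Finset.mem_filter]
    exact ⟨Finset.mem_univ _, Finset.singleton_nonempty 0, by simp [hm']⟩
  have hfilter0 : univ.filter (fun x : ι → ZMod 2 =>
        ∀ s ∈ ({0} : Finset (ι → ZMod 2)), ((u (x + s)):ℕ) < thr)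
      = univ.filter (fun x : ι → ZMod 2 => ((u x):ℕ) < thr) := by
    apply Finset.filter_congr
    intro x _
    simp
  have hCcard : (C.ncard : ℝ)
      = ((univ.filter (fun x : ι → ZMod 2 => ((u x):ℕ) < thr)).card : ℝ) := by
    have : C = ((univ.filter (fun x : ι → ZMod 2 => ((u x):ℕ) < thr) : Finset _) : Set _) := by
      ext x
      simp [hC]
    rw [this, Set.ncard_coe_finset]
  have hdens : |(C.ncard : ℝ) / (2:ℝ)^n - q| ≤ δ₂ := by
    have := hkey ({0} : Finset (ι → ZMod 2)) h0CAND
    rw [hfilter0, Finset.card_singleton, pow_one] at this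
    rw [hCcard]
    exact this
  refine ⟨C, ?_, ?_, ?_⟩
  · have h1 := abs_le.mp hdens
    have h2 := abs_le.mp (hqppow 1 hm'pos)
    rw [pow_one, pow_one] at h2
    have hgoal : p - δ ≤ (C.ncard : ℝ) / (2:ℝ)^n := by
      rw [hδ₂] at h1
      linarith [h1.1, h2.1]
    calc 1 - ε - δ = p - δ := by rw [hp]
      _ ≤ (C.ncard : ℝ) / (2:ℝ)^n := hgoal
      _ = (C.ncard : ℝ) / 2 ^ Fintype.card ι := by rw [← hn_def]
  · have h1 := abs_le.mp hdens
    have h2 := abs_le.mp (hqppow 1 hm'pos)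
    rw [pow_one, pow_one] at h2
    have hgoal : (C.ncard : ℝ) / (2:ℝ)^n ≤ p + δ := by
      rw [hδ₂] at h1
      linarith [h1.2, h2.2]
    calc (C.ncard : ℝ) / 2 ^ Fintype.card ι = (C.ncard : ℝ) / (2:ℝ)^n := by rw [← hn_def]
      _ ≤ p + δ := hgoal
      _ = 1 - ε + δ := by rw [hp]
  · intro X hXm
    have hXfin : X.Finite := Set.toFinite X
    have hXcard : X.ncard = hXfin.toFinset.card := Set.ncard_eq_toFinset_card X hXfin
    set Xf := hXfin.toFinset with hXfdef
    by_cases hXe : Xf = ∅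
    · have hXempty : X = ∅ := Set.Finite.toFinset_eq_empty.mp hXe
      rw [hXempty]
      have hbi : (⋂ s ∈ (∅ : Set (ι → ZMod 2)), (C + {s})) = Set.univ := by
        simp
      rw [hbi, Set.ncard_univ, Nat.card_eq_fintype_card, hNN, Set.ncard_empty, pow_zero]
      have hone : (((2:ℕ)^n : ℕ) : ℝ) / (2:ℝ) ^ Fintype.card ι = 1 := by
        rw [← hn_def]
        push_cast
        field_simp
      rw [hone]
      simpa using hδ0
    · have hXfne : Xf.Nonempty := Finset.nonempty_iff_ne_empty.mpr hXe
      have hXfcard : Xf.card ≤ m' := by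
        rw [← hXcard]
        omega
      have hXfCAND : Xf ∈ CAND := by
        rw [hCAND, Finset.mem_filter]
        exact ⟨Finset.mem_univ _, hXfne, hXfcard⟩
      have hseteq : (⋂ s ∈ X, (C + {s}))
          = ((univ.filter (fun x : ι → ZMod 2 =>
              ∀ s ∈ Xf, ((u (x + s)):ℕ) < thr) : Finset _) : Set _) := by
        ext x
        rw [Set.mem_iInter₂, Finset.mem_coe, Finset.mem_filter]
        constructor
        · intro h
          exact ⟨Finset.mem_univ _,
            fun s hs => (hmem_add s x).mp (h s (hXfin.mem_toFinset.mp hs))⟩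
        · intro h s hs
          exact (hmem_add s x).mpr (h.2 s (hXfin.mem_toFinset.mpr hs))
      rw [hseteq, Set.ncard_coe_finset, hXcard]
      have hk1 := hkey Xf hXfCAND
      have hk2 := hqppow Xf.card hXfcard
      have habs : |((univ.filter (fun x : ι → ZMod 2 =>
            ∀ s ∈ Xf, ((u (x + s)):ℕ) < thr)).card : ℝ) / (2:ℝ)^n - p ^ Xf.card|
          ≤ δ₂ + δ / 4 := by
        calc |((univ.filter (fun x : ι → ZMod 2 =>
              ∀ s ∈ Xf, ((u (x + s)):ℕ) < thr)).card : ℝ) / (2:ℝ)^n - p ^ Xf.card|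
            ≤ |((univ.filter (fun x : ι → ZMod 2 =>
              ∀ s ∈ Xf, ((u (x + s)):ℕ) < thr)).card : ℝ) / (2:ℝ)^n - q ^ Xf.card|
              + |q ^ Xf.card - p ^ Xf.card| := by
              have := abs_sub_le (((univ.filter (fun x : ι → ZMod 2 =>
                ∀ s ∈ Xf, ((u (x + s)):ℕ) < thr)).card : ℝ) / (2:ℝ)^n)
                (q ^ Xf.card) (p ^ Xf.card)
              exact this
          _ ≤ δ₂ + δ / 4 := add_le_add hk1 hk2
      have hlt : δ₂ + δ / 4 < δ := by
        rw [hδ₂]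
        linarith
      calc |((univ.filter (fun x : ι → ZMod 2 =>
            ∀ s ∈ Xf, ((u (x + s)):ℕ) < thr)).card : ℝ) / 2 ^ Fintype.card ι - p ^ Xf.card|
          = |((univ.filter (fun x : ι → ZMod 2 =>
            ∀ s ∈ Xf, ((u (x + s)):ℕ) < thr)).card : ℝ) / (2:ℝ)^n - p ^ Xf.card| := by
            rw [← hn_def]
        _ ≤ δ₂ + δ / 4 := habs
        _ < δ := hlt

end FINAL
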